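/- There exists a compact subset K of ℓ₁ such that for every real Banach space Y, if there exists a distance-preserving map from K into Y, then there exists a linear isometric embedding of ℓ₁ into Y. -/

import Mathlib

noncomputable section
namespace Stmt10

abbrev L1 := lp (fun _ : ℕ => ℝ) 1

def sgn (b : Bool) : ℝ := if b then 1 else -1

lemma abs_sgn (b : Bool) : |sgn b| = 1 := by cases b <;> simp [sgn]

def gfun (σ : ℕ → Bool) : ℕ → ℝ := fun k => sgn (σ k) * (2⁻¹ : ℝ)^k

lemma norm_gfun (σ : ℕ → Bool) (k : ℕ) : ‖gfun σ k‖ = (2⁻¹:ℝ)^k := by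
  rw [Real.norm_eq_abs, gfun, abs_mul, abs_sgn, one_mul, abs_pow]
  norm_num [abs_of_nonneg]

lemma summable_half : Summable (fun k : ℕ => ((2:ℝ)⁻¹)^k) :=
  summable_geometric_of_lt_one (by norm_num) (by norm_num)

lemma tsum_half : ∑' k : ℕ, ((2:ℝ)⁻¹)^k = 2 := by
  rw [tsum_geometric_of_lt_one (by norm_num) (by norm_num)]; norm_num

lemma mem_gfun (σ : ℕ → Bool) : Memℓp (gfun σ) 1 := by
  apply memℓp_gen_iff (p := 1) (by norm_num) |>.2
  simp only [ENNReal.toReal_one, Real.rpow_one, norm_gfun]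
  exact summable_half

def phi (σ : ℕ → Bool) : L1 := ⟨gfun σ, mem_gfun σ⟩

@[simp] lemma phi_apply (σ : ℕ → Bool) (k : ℕ) : (phi σ : ℕ → ℝ) k = sgn (σ k) * (2⁻¹:ℝ)^k := rfl

lemma norm_lp (x : L1) : ‖x‖ = ∑' k, ‖(x : ℕ → ℝ) k‖ := by
  rw [lp.norm_eq_tsum_rpow (by norm_num) x]
  simp [Real.rpow_one]


def delta (σ τ : ℕ → Bool) : ℕ → ℝ := fun k => if σ k = τ k then 0 else 2 * (2⁻¹:ℝ)^k

lemma delta_nonneg (σ τ : ℕ → Bool) (k : ℕ) : 0 ≤ delta σ τ k := by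
  unfold delta; split <;> positivity

lemma delta_le (σ τ : ℕ → Bool) (k : ℕ) : delta σ τ k ≤ 2 * (2⁻¹:ℝ)^k := by
  unfold delta; split
  · positivity
  · exact le_refl _

lemma summable_delta (σ τ : ℕ → Bool) : Summable (delta σ τ) := by
  apply Summable.of_nonneg_of_le (delta_nonneg σ τ) (delta_le σ τ)
  exact summable_half.mul_left 2

lemma abs_diff_gfun (σ τ : ℕ → Bool) (k : ℕ) : ‖gfun σ k - gfun τ k‖ = delta σ τ k := by
  unfold gfun delta sgn
  have hp : (0:ℝ) ≤ (2⁻¹:ℝ)^k := by positivity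
  cases h1 : σ k <;> cases h2 : τ k <;>
    simp [abs_of_nonneg, hp, abs_of_nonpos, two_mul, abs_sub_comm] <;>
    rw [show -(2⁻¹:ℝ)^k - (2⁻¹:ℝ)^k = -((2⁻¹:ℝ)^k + (2⁻¹:ℝ)^k) by ring, abs_neg,
      abs_of_nonneg (by positivity)] <;> ring

lemma dist_phi (σ τ : ℕ → Bool) : dist (phi σ) (phi τ) = ∑' k, delta σ τ k := by
  rw [dist_eq_norm, norm_lp]
  congr 1
  funext k
  rw [lp.coeFn_sub, Pi.sub_apply]
  exact abs_diff_gfun σ τ k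


lemma tail_bound (σ τ : ℕ → Bool) (N : ℕ) (h : ∀ i < N, σ i = τ i) :
    dist (phi σ) (phi τ) ≤ 4 * (2⁻¹:ℝ)^N := by
  rw [dist_phi]
  have hle : ∀ k, delta σ τ k ≤ (if k < N then 0 else 2 * (2⁻¹:ℝ)^k) := by
    intro k
    by_cases hk : k < N
    · simp [hk, delta, h k hk]
    · simpa [hk] using delta_le σ τ k
  have hsum : Summable (fun k => (if k < N then 0 else 2 * (2⁻¹:ℝ)^k)) := by
    apply Summable.of_nonneg_of_le (fun k => by split <;> positivity)
      (fun k => by by_cases hk : k < N <;> simp [hk] <;> positivity) (summable_half.mul_left 2)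
  refine le_trans (Summable.tsum_le_tsum hle (summable_delta σ τ) hsum) ?_
  have := Summable.sum_add_tsum_nat_add (f := fun k => (if k < N then 0 else 2 * (2⁻¹:ℝ)^k)) N hsum
  rw [← this]
  have h1 : ∑ i ∈ Finset.range N, (if i < N then 0 else 2 * (2⁻¹:ℝ)^i) = 0 := by
    apply Finset.sum_eq_zero; intro i hi; simp [Finset.mem_range.1 hi]
  rw [h1, zero_add]
  have h2 : ∀ i : ℕ, (if i + N < N then 0 else 2 * (2⁻¹:ℝ)^(i+N)) = (2 * (2⁻¹:ℝ)^N) * (2⁻¹:ℝ)^i := by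
    intro i; rw [if_neg (by omega)]; ring
  rw [tsum_congr h2, tsum_mul_left, tsum_half]
  ring_nf
  exact le_refl _

lemma continuous_phi : Continuous phi := by
  rw [continuous_iff_continuousAt]
  intro σ
  rw [ContinuousAt, Metric.tendsto_nhds]
  intro ε hε
  obtain ⟨N, hN⟩ : ∃ N : ℕ, 4 * (2⁻¹:ℝ)^N < ε := by
    obtain ⟨N, hN⟩ := exists_pow_lt_of_lt_one (show (0:ℝ) < ε/4 by linarith) (by norm_num : (2⁻¹:ℝ) < 1)
    exact ⟨N, by linarith⟩
  have hmem : {τ : ℕ → Bool | ∀ i < N, τ i = σ i} ∈ nhds σ := by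
    have : {τ : ℕ → Bool | ∀ i < N, τ i = σ i} = ⋂ i ∈ Finset.range N, (fun τ : ℕ → Bool => τ i) ⁻¹' {σ i} := by
      ext τ; simp [Finset.mem_range]
    rw [this]
    refine (Filter.biInter_finset_mem (Finset.range N)).2 ?_
    intro i _
    exact IsOpen.mem_nhds ((continuous_apply i).isOpen_preimage _ (isOpen_discrete _)) rfl
  filter_upwards [hmem] with τ hτ
  exact lt_of_le_of_lt (tail_bound τ σ N hτ) hN

def Kset : Set L1 := Set.range phi

lemma compact_K : IsCompact Kset := isCompact_range continuous_phi

def pt (σ : ℕ → Bool) : Kset := ⟨phi σ, ⟨σ, rfl⟩⟩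

def pfull : ℕ → Bool := fun _ => true

def qf (n : ℕ) : ℕ → Bool := fun k => if k = n then false else true

variable {Y : Type*} [NormedAddCommGroup Y] [NormedSpace ℝ Y] [CompleteSpace Y]

lemma norm_j_sub (j : Kset → Y) (hj : Isometry j) (σ τ : ℕ → Bool) :
    ‖j (pt σ) - j (pt τ)‖ = ∑' k, delta σ τ k := by
  rw [← dist_eq_norm, hj.dist_eq, Subtype.dist_eq, ← dist_phi]
  rfl

lemma tsum_delta_q (n : ℕ) : ∑' k, delta pfull (qf n) k = 2 * (2⁻¹:ℝ)^n := by
  rw [tsum_eq_single n]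
  · simp [delta, pfull, qf]
  · intro b hb; simp [delta, pfull, qf, hb]

lemma tsum_delta_full (ε : ℕ → Bool) : ∑' k, delta ε (fun k => !(ε k)) k = 4 := by
  have : ∀ k, delta ε (fun k => !(ε k)) k = 2 * (2⁻¹:ℝ)^k := by
    intro k; unfold delta; rw [if_neg]; cases h : ε k <;> simp [h]
  rw [tsum_congr this, tsum_mul_left, tsum_half]; norm_num

def yvec (j : Kset → Y) (n : ℕ) : Y :=
  (2 * (2⁻¹:ℝ)^n)⁻¹ • (j (pt pfull) - j (pt (qf n)))

lemma norm_yvec (j : Kset → Y) (hj : Isometry j) (n : ℕ) : ‖yvec j n‖ = 1 := by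
  rw [yvec, norm_smul, norm_j_sub j hj, tsum_delta_q]
  rw [norm_inv, Real.norm_eq_abs, abs_of_nonneg (by positivity)]
  field_simp

lemma delta_comm (σ τ : ℕ → Bool) (k : ℕ) : delta σ τ k = delta τ σ k := by
  simp [delta, eq_comm]

lemma key (j : Kset → Y) (hj : Isometry j) (ε : ℕ → Bool) (f : Y →L[ℝ] ℝ) (hf : ‖f‖ = 1)
    (hfv : f (j (pt ε) - j (pt (fun k => !(ε k)))) = 4) (n : ℕ) :
    f (yvec j n) = sgn (ε n) := by
  have hbd : ∀ u v : Y, f (u - v) ≤ ‖u - v‖ := by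
    intro u v
    calc f (u - v) ≤ |f (u - v)| := le_abs_self _
    _ ≤ ‖f‖ * ‖u - v‖ := f.le_opNorm _
    _ = ‖u - v‖ := by rw [hf, one_mul]
  have main : ∀ (ρ ρ' : ℕ → Bool),
      (∀ k, delta ε ρ k + delta ρ ρ' k + delta ρ' (fun m => !(ε m)) k
        = delta ε (fun m => !(ε m)) k) →
      f (j (pt ρ) - j (pt ρ')) = ∑' k, delta ρ ρ' k := by
    intro ρ ρ' hchain
    have hsum3 : ‖j (pt ε) - j (pt ρ)‖ + ‖j (pt ρ) - j (pt ρ')‖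
        + ‖j (pt ρ') - j (pt (fun m => !(ε m)))‖ = ‖j (pt ε) - j (pt (fun m => !(ε m)))‖ := by
      rw [norm_j_sub j hj, norm_j_sub j hj, norm_j_sub j hj, norm_j_sub j hj]
      rw [← Summable.tsum_add (summable_delta _ _) (summable_delta _ _),
          ← Summable.tsum_add ((summable_delta _ _).add (summable_delta _ _)) (summable_delta _ _)]
      exact tsum_congr hchain
    have hAD : ‖j (pt ε) - j (pt (fun m => !(ε m)))‖ = 4 := by
      rw [norm_j_sub j hj]; exact tsum_delta_full ε
    have hsplit : f (j (pt ε) - j (pt ρ)) + f (j (pt ρ) - j (pt ρ'))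
        + f (j (pt ρ') - j (pt (fun m => !(ε m)))) = f (j (pt ε) - j (pt (fun m => !(ε m)))) := by
      rw [← map_add, ← map_add]
      congr 1
      abel
    have h1 := hbd (j (pt ε)) (j (pt ρ))
    have h2 := hbd (j (pt ρ')) (j (pt (fun m => !(ε m))))
    have h3 := hbd (j (pt ρ)) (j (pt ρ'))
    have heq : f (j (pt ρ) - j (pt ρ')) = ‖j (pt ρ) - j (pt ρ')‖ := by
      rw [hfv, ← hAD] at hsplit
      linarith
    rw [heq, norm_j_sub j hj]
  have hpos : (0:ℝ) < 2 * (2⁻¹:ℝ)^n := by positivity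
  cases h : ε n
  · have hchain : ∀ k, delta ε (qf n) k + delta (qf n) pfull k
        + delta pfull (fun m => !(ε m)) k = delta ε (fun m => !(ε m)) k := by
      intro k
      by_cases hk : k = n
      · subst hk; simp [delta, pfull, qf, h]
      · cases hε : ε k <;> simp [delta, pfull, qf, hk, hε]
    have hval := main (qf n) pfull hchain
    rw [tsum_congr (delta_comm (qf n) pfull), tsum_delta_q] at hval
    have hswap : j (pt pfull) - j (pt (qf n)) = -(j (pt (qf n)) - j (pt pfull)) := by abel
    rw [yvec, map_smul, smul_eq_mul, hswap, map_neg, hval, sgn]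
    field_simp
    simp
  · have hchain : ∀ k, delta ε pfull k + delta pfull (qf n) k
        + delta (qf n) (fun m => !(ε m)) k = delta ε (fun m => !(ε m)) k := by
      intro k
      by_cases hk : k = n
      · subst hk; simp [delta, pfull, qf, h]
      · cases hε : ε k <;> simp [delta, pfull, qf, hk, hε]
    have hval := main pfull (qf n) hchain
    rw [tsum_delta_q] at hval
    rw [yvec, map_smul, smul_eq_mul, hval, sgn]
    field_simp
    simp


lemma summable_abs (x : L1) : Summable (fun n => ‖(x : ℕ → ℝ) n‖) := by
  have := lp.memℓp x
  rw [memℓp_gen_iff (p := 1) (by norm_num)] at this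
  simpa using this

lemma summable_vec (j : Kset → Y) (hj : Isometry j) (x : L1) :
    Summable (fun n => (x : ℕ → ℝ) n • yvec j n) := by
  apply Summable.of_norm
  have : ∀ n, ‖(x : ℕ → ℝ) n • yvec j n‖ = ‖(x : ℕ → ℝ) n‖ := by
    intro n; rw [norm_smul, norm_yvec j hj, mul_one]
  rw [funext this]
  exact summable_abs x

lemma exists_fun (j : Kset → Y) (hj : Isometry j) (ε : ℕ → Bool) :
    ∃ f : Y →L[ℝ] ℝ, ‖f‖ = 1 ∧ f (j (pt ε) - j (pt (fun k => !(ε k)))) = 4 := by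
  have hnorm : ‖j (pt ε) - j (pt (fun k => !(ε k)))‖ = 4 := by
    rw [norm_j_sub j hj]; exact tsum_delta_full ε
  have hne : j (pt ε) - j (pt (fun k => !(ε k))) ≠ 0 := by
    intro hc
    rw [hc, norm_zero] at hnorm
    norm_num at hnorm
  obtain ⟨f, hf1, hf2⟩ := exists_dual_vector ℝ _ (norm_ne_zero_iff.mpr hne)
  exact ⟨f, hf1, by rw [hf2, hnorm]; norm_num⟩

def Tmap (j : Kset → Y) (hj : Isometry j) : L1 →ₗᵢ[ℝ] Y where
  toFun := fun x => ∑' n, (x : ℕ → ℝ) n • yvec j n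
  map_add' := by
    intro x z
    simp only [lp.coeFn_add, Pi.add_apply, add_smul]
    exact Summable.tsum_add (summable_vec j hj x) (summable_vec j hj z)
  map_smul' := by
    intro c x
    simp only [lp.coeFn_smul, Pi.smul_apply, smul_eq_mul, RingHom.id_apply, mul_smul]
    exact Summable.tsum_const_smul c (summable_vec j hj x)
  norm_map' := by
    intro x
    have hle : ‖∑' n, (x : ℕ → ℝ) n • yvec j n‖ ≤ ‖x‖ := by
      refine le_trans (norm_tsum_le_tsum_norm ?_) ?_
      · have : ∀ n, ‖(x : ℕ → ℝ) n • yvec j n‖ = ‖(x : ℕ → ℝ) n‖ := by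
          intro n; rw [norm_smul, norm_yvec j hj, mul_one]
        rw [funext this]; exact summable_abs x
      · rw [norm_lp x]
        apply Summable.tsum_le_tsum _ _ (summable_abs x)
        · intro n; rw [norm_smul, norm_yvec j hj, mul_one]
        · have : ∀ n, ‖(x : ℕ → ℝ) n • yvec j n‖ = ‖(x : ℕ → ℝ) n‖ := by
            intro n; rw [norm_smul, norm_yvec j hj, mul_one]
          rw [funext this]; exact summable_abs x
    have hge : ‖x‖ ≤ ‖∑' n, (x : ℕ → ℝ) n • yvec j n‖ := by
      set ε : ℕ → Bool := fun n => decide (0 ≤ (x : ℕ → ℝ) n) with hε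
      obtain ⟨f, hf1, hf2⟩ := exists_fun j hj ε
      have hfy : ∀ n, f (yvec j n) = sgn (ε n) := key j hj ε f hf1 hf2
      have hft : f (∑' n, (x : ℕ → ℝ) n • yvec j n) = ∑' n, ‖(x : ℕ → ℝ) n‖ := by
        rw [f.map_tsum (summable_vec j hj x)]
        apply tsum_congr
        intro n
        rw [map_smul, smul_eq_mul, hfy n]
        by_cases h : 0 ≤ (x : ℕ → ℝ) n
        · simp [hε, h, sgn, Real.norm_eq_abs, abs_of_nonneg h]
        · simp only [hε, h, decide_eq_true_eq, if_false, sgn, Real.norm_eq_abs,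
            abs_of_neg (lt_of_not_ge h), decide_eq_false h, if_neg (Bool.false_ne_true)]
          ring
      calc ‖x‖ = f (∑' n, (x : ℕ → ℝ) n • yvec j n) := by rw [hft, norm_lp x]
      _ ≤ |f (∑' n, (x : ℕ → ℝ) n • yvec j n)| := le_abs_self _
      _ ≤ ‖f‖ * ‖∑' n, (x : ℕ → ℝ) n • yvec j n‖ := f.le_opNorm _
      _ = ‖∑' n, (x : ℕ → ℝ) n • yvec j n‖ := by rw [hf1, one_mul]
    exact le_antisymm hle hge

end Stmt10

universe u

/-- There is a compact subset `K` of `ℓ₁` such that whenever `K` embeds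
isometrically into a real Banach space `Y`, then `ℓ₁` is linearly isometric to a subspace
of `Y`. -/
theorem stmt10 :
    ∃ K : Set (lp (fun _ : ℕ => ℝ) 1), IsCompact K ∧
      ∀ (Y : Type u) [NormedAddCommGroup Y] [NormedSpace ℝ Y] [CompleteSpace Y],
        (∃ j : K → Y, Isometry j) → Nonempty (lp (fun _ : ℕ => ℝ) 1 →ₗᵢ[ℝ] Y) := by
  refine ⟨Stmt10.Kset, Stmt10.compact_K, ?_⟩
  intro Y _ _ _ ⟨j, hj⟩
  exact ⟨Stmt10.Tmap j hj⟩
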